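/- Let p be a prime, G a finite p-group, k = ZMod p, kG the group algebra with Jacobson radical J, A a finite type with a linear order, RLL the reverse length-lexicographical order on the free monoid M on A, and φ : FreeAlgebra k A →ₐ[k] kG a surjective k-algebra homomorphism with φ(x_a) ∈ J for every generator. Then a word w of length r is an RLL-tip if and only if φ(w) lies in the sum of J^{r+1} and the k-span of {φ(v) : v a word of length r, v <_RLL w}. -/

import Mathlib

/-- The monomial in the free algebra corresponding to a word in the free monoid. -/
noncomputable def wordMonomial (k : Type*) [CommRing k] {A : Type*} (w : FreeMonoid A) :
    FreeAlgebra k A :=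
  FreeMonoid.lift (FreeAlgebra.ι k) w

/-- The strict length-lexicographical order on words. -/
def LLlt {A : Type*} [LinearOrder A] (w₁ w₂ : FreeMonoid A) : Prop :=
  w₁.toList.length < w₂.toList.length ∨
    (w₁.toList.length = w₂.toList.length ∧ List.Lex (· < ·) w₁.toList w₂.toList)

/-- The strict reverse length-lexicographical order. -/
def RLLlt {A : Type*} [LinearOrder A] (w₁ w₂ : FreeMonoid A) : Prop :=
  LLlt w₂ w₁

lemma wordMonomial_one {k : Type*} [CommRing k] {A : Type*} :
    wordMonomial k (1 : FreeMonoid A) = 1 := map_one (FreeMonoid.lift (FreeAlgebra.ι k))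

lemma wordMonomial_mul {k : Type*} [CommRing k] {A : Type*} (w v : FreeMonoid A) :
    wordMonomial k (w * v) = wordMonomial k w * wordMonomial k v :=
  map_mul (FreeMonoid.lift (FreeAlgebra.ι k)) _ _

lemma span_range_wordMonomial (k : Type*) [CommRing k] (A : Type*) :
    Submodule.span k (Set.range (fun w : FreeMonoid A => wordMonomial k w)) = ⊤ := by
  rw [eq_top_iff]
  rintro x -
  induction x using FreeAlgebra.induction with
  | grade0 r =>
      rw [Algebra.algebraMap_eq_smul_one]
      exact Submodule.smul_mem _ _ (Submodule.subset_span ⟨1, wordMonomial_one⟩)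
  | grade1 a =>
      exact Submodule.subset_span ⟨FreeMonoid.of a, FreeMonoid.lift_eval_of _ _⟩
  | mul a b ha hb =>
      have h := Submodule.mul_mem_mul ha hb
      rw [Submodule.span_mul_span] at h
      refine Submodule.span_le.mpr ?_ h
      rintro x ⟨y, ⟨w1, rfl⟩, z, ⟨w2, rfl⟩, rfl⟩
      exact Submodule.subset_span ⟨w1 * w2, wordMonomial_mul w1 w2⟩
  | add a b ha hb => exact add_mem ha hb

lemma list_prod_mem_pow {R : Type*} [Ring R] {J : Ideal R} :
    ∀ l : List R, (∀ x ∈ l, x ∈ J) → l.prod ∈ J ^ l.length := by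
  intro l
  induction l using List.reverseRecOn with
  | nil =>
      intro _
      have h0 : (J : Ideal R) ^ 0 = 1 := rfl
      rw [List.prod_nil, List.length_nil, h0, Ideal.one_eq_top]
      exact Submodule.mem_top
  | append_singleton t a ih =>
      intro h
      have hs : (J : Ideal R) ^ (t.length + 1) = J ^ t.length * J := rfl
      rw [List.prod_append, List.prod_singleton, List.length_append,
        List.length_singleton, hs]
      exact Ideal.mul_mem_mul (ih fun x hx => h x (List.mem_append_left _ hx))
        (h a (List.mem_append_right _ (List.mem_singleton_self a)))

/-- a word `w` of length `r` is an RLL-tip if and only if `φ(w)` lies in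
the sum of `J^{r+1}` and the span of the images of the length-`r` words that are
RLL-smaller than `w`. -/
theorem rll_tip_iff_mod_radical_power
    (p : ℕ) (hp : p.Prime) (G : Type*) [Group G] [Fintype G] (hG : IsPGroup p G)
    (A : Type*) [Finite A] [LinearOrder A]
    (J : Ideal (MonoidAlgebra (ZMod p) G))
    (hJ : J = (⊥ : Ideal (MonoidAlgebra (ZMod p) G)).jacobson)
    (φ : FreeAlgebra (ZMod p) A →ₐ[ZMod p] MonoidAlgebra (ZMod p) G)
    (hsurj : Function.Surjective φ)
    (hrad : ∀ a : A, φ (FreeAlgebra.ι (ZMod p) a) ∈ J)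
    (IsTip : FreeMonoid A → Prop)
    (hTip : ∀ w, IsTip w ↔ φ (wordMonomial (ZMod p) w) ∈
      Submodule.span (ZMod p)
        ((fun v => φ (wordMonomial (ZMod p) v)) '' {v | RLLlt v w})) :
    ∀ (r : ℕ) (w : FreeMonoid A), w.toList.length = r →
      (IsTip w ↔ φ (wordMonomial (ZMod p) w) ∈
        Submodule.restrictScalars (ZMod p) (J ^ (r + 1)) ⊔
        Submodule.span (ZMod p)
          ((fun v => φ (wordMonomial (ZMod p) v)) ''
            {v : FreeMonoid A | v.toList.length = r ∧ RLLlt v w})) := by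
  haveI : Fact p.Prime := ⟨hp⟩
  set kG := MonoidAlgebra (ZMod p) G
  set W : FreeMonoid A → kG := fun v => φ (wordMonomial (ZMod p) v) with hWdef
  set T : ℕ → Submodule (ZMod p) kG :=
    fun n => Submodule.span (ZMod p) (W '' {v | n ≤ v.toList.length}) with hTdef
  -- basic facts
  have hW_mul : ∀ v u, W v * W u = W (v * u) := by
    intro v u
    simp only [hWdef, wordMonomial_mul, map_mul]
  have hlen_mul : ∀ v u : FreeMonoid A,
      (v * u).toList.length = v.toList.length + u.toList.length := by
    intro v u; simp
  -- each word of length n maps into J^n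
  have hpow : ∀ v : FreeMonoid A, W v ∈ J ^ v.toList.length := by
    intro v
    have h1 : W v = (v.toList.map (fun a => φ (FreeAlgebra.ι (ZMod p) a))).prod := by
      simp only [hWdef, wordMonomial, FreeMonoid.lift_apply, map_list_prod, List.map_map]
      rfl
    rw [h1]
    have := list_prod_mem_pow (J := J)
      (v.toList.map (fun a => φ (FreeAlgebra.ι (ZMod p) a)))
      (by rintro x hx; obtain ⟨a, _, rfl⟩ := List.mem_map.mp hx; exact hrad a)
    simpa using this
  have hT_le : ∀ n, T n ≤ Submodule.restrictScalars (ZMod p) (J ^ n) := by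
    intro n
    refine Submodule.span_le.mpr ?_
    rintro x ⟨v, hv, rfl⟩
    exact Ideal.pow_le_pow_right hv (hpow v)
  -- T 0 = ⊤
  have hT_top : T 0 = ⊤ := by
    have h0 : {v : FreeMonoid A | 0 ≤ v.toList.length} = Set.univ := by
      ext v; simp
    have : W '' {v | 0 ≤ v.toList.length} =
        φ '' (Set.range (fun w : FreeMonoid A => wordMonomial (ZMod p) w)) := by
      rw [h0, Set.image_univ, ← Set.range_comp]; rfl
    rw [hTdef]
    simp only [this]
    rw [show (⇑φ '' Set.range fun w : FreeMonoid A => wordMonomial (ZMod p) w) =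
        ⇑φ.toLinearMap '' Set.range fun w : FreeMonoid A => wordMonomial (ZMod p) w from rfl]
    rw [Submodule.span_image, span_range_wordMonomial, Submodule.map_top]
    rw [LinearMap.range_eq_top]
    exact hsurj
  -- J is proper
  have hJne : (1 : kG) ∉ J := by
    intro h1
    have : J = ⊤ := (Ideal.eq_top_iff_one J).mpr h1
    rw [hJ, Ideal.jacobson_eq_top_iff] at this
    exact absurd this bot_ne_top
  -- J ≤ T 1
  have hJT1 : Submodule.restrictScalars (ZMod p) J ≤ T 1 := by
    have hC : ∀ x : kG, ∃ c : ZMod p, x - c • 1 ∈ T 1 := by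
      intro x
      have hx : x ∈ T 0 := hT_top ▸ Submodule.mem_top
      induction hx using Submodule.span_induction with
      | mem y hy =>
          obtain ⟨v, -, rfl⟩ := hy
          rcases Nat.eq_zero_or_pos v.toList.length with h0 | h0
          · refine ⟨1, ?_⟩
            have hv1 : v = 1 := by
              have := List.length_eq_zero_iff.mp h0
              exact FreeMonoid.toList.injective (by simpa using this)
            rw [hv1]
            simp [hWdef, wordMonomial_one]
          · refine ⟨0, ?_⟩
            rw [zero_smul, sub_zero]
            exact Submodule.subset_span ⟨v, h0, rfl⟩
      | zero => exact ⟨0, by simp⟩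
      | add y z hy hz ihy ihz =>
          obtain ⟨c, hc⟩ := ihy; obtain ⟨d, hd⟩ := ihz
          refine ⟨c + d, ?_⟩
          have : y + z - (c + d) • 1 = (y - c • 1) + (z - d • 1) := by
            rw [add_smul]; abel
          rw [this]; exact add_mem hc hd
      | smul a y hy ihy =>
          obtain ⟨c, hc⟩ := ihy
          refine ⟨a * c, ?_⟩
          have : a • y - (a * c) • 1 = a • (y - c • 1) := by
            rw [smul_sub, mul_smul]
          rw [this]; exact Submodule.smul_mem _ _ hc
    intro x hx
    obtain ⟨c, hc⟩ := hC x
    have hT1J : T 1 ≤ Submodule.restrictScalars (ZMod p) J := by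
      have hp1 : (J : Ideal kG) ^ 1 = J := by
        show (1 : Ideal kG) * J = J
        rw [Ideal.one_eq_top, Ideal.top_mul]
      have := hT_le 1; rwa [hp1] at this
    by_cases h0 : c = 0
    · rw [h0] at hc; simpa using hc
    · exfalso
      have hcJ : c • (1 : kG) ∈ Submodule.restrictScalars (ZMod p) J := by
        have heq : c • (1 : kG) = x - (x - c • 1) := (sub_sub_cancel x (c • (1 : kG))).symm
        rw [heq]
        exact Submodule.sub_mem _ hx (hT1J hc)
      have h1 : (1 : kG) = c⁻¹ • (c • (1 : kG)) := by
        rw [smul_smul, inv_mul_cancel₀ h0, one_smul]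
      exact hJne (by rw [h1]; exact Submodule.smul_mem (Submodule.restrictScalars (ZMod p) J) _ hcJ)
  -- T m * T n ≤ T (m + n)
  have hTmul : ∀ m n, T m * T n ≤ T (m + n) := by
    intro m n
    rw [hTdef]
    rw [Submodule.span_mul_span]
    refine Submodule.span_le.mpr ?_
    rintro x ⟨y, ⟨v, hv, rfl⟩, z, ⟨u, hu, rfl⟩, rfl⟩
    refine Submodule.subset_span ⟨v * u, ?_, (hW_mul v u).symm ▸ rfl⟩
    have hv' : m ≤ v.toList.length := hv
    have hu' : n ≤ u.toList.length := hu
    rw [Set.mem_setOf_eq, hlen_mul]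
    omega
  -- J^n ≤ T n
  have hle : ∀ n, Submodule.restrictScalars (ZMod p) (J ^ n) ≤ T n := by
    intro n
    induction n with
    | zero => rw [hT_top]; exact le_top
    | succ n ih =>
        intro x hx
        have hx' : x ∈ (J ^ n) • (J : Submodule kG kG) := hx
        refine Submodule.smul_induction_on hx' ?_ ?_
        · intro m hm nn hnn
          exact hTmul n 1 (Submodule.mul_mem_mul (ih hm) (hJT1 hnn))
        · intro a b ha hb; exact add_mem ha hb
  have hTeq : ∀ n, T n = Submodule.restrictScalars (ZMod p) (J ^ n) :=
    fun n => le_antisymm (hT_le n) (hle n)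
  -- main conclusion
  intro r w hw
  have hset : {v : FreeMonoid A | RLLlt v w} =
      {v : FreeMonoid A | r + 1 ≤ v.toList.length} ∪
      {v : FreeMonoid A | v.toList.length = r ∧ RLLlt v w} := by
    ext v
    simp only [Set.mem_setOf_eq, Set.mem_union]
    constructor
    · intro h
      rcases h with h | h
      · left; omega
      · right; exact ⟨by omega, Or.inr h⟩
    · rintro (h | ⟨hlen, hlt⟩)
      · exact Or.inl (by omega)
      · exact hlt
  rw [hTip w, hset, Set.image_union, Submodule.span_union]
  have : Submodule.span (ZMod p) (W '' {v : FreeMonoid A | r + 1 ≤ v.toList.length}) =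
      Submodule.restrictScalars (ZMod p) (J ^ (r + 1)) := hTeq (r + 1)
  rw [this]
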